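/- Let (W,S) be a Coxeter system and π ∈ W. Then: (1) for every reduced word w for π, the singleton set {w} is backward-saturated; and (2) the set RW(π) of all reduced words for π is backward-saturated. -/

import Mathlib

/-!
STATEMENT 10: Let (W,S) be a Coxeter system and π ∈ W. Then: (1) for every reduced word w
for π, the singleton set {w} is backward-saturated; and (2) the set RW(π) of all reduced
words for π is backward-saturated.
-/

/-- A set `Ws` of words is backward-saturated: either `Ws` is empty, or for each letter `σ`
such that `Ws` contains a word beginning with `σ`, the set `Ws'_σ = {w | σ·w ∈ Ws}` is
backward-saturated and every word of `Ws` contains some word of `Ws'_σ` as a subsequence. -/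
inductive BackSat {B : Type*} : Set (List B) → Prop
  | empty : BackSat (∅ : Set (List B))
  | step (Ws : Set (List B))
      (h1 : ∀ σ : B, (∃ w : List B, σ :: w ∈ Ws) → BackSat {w : List B | σ :: w ∈ Ws})
      (h2 : ∀ σ : B, (∃ w : List B, σ :: w ∈ Ws) →
        ∀ u ∈ Ws, ∃ w : List B, σ :: w ∈ Ws ∧ w.Sublist u) :
      BackSat Ws

set_option linter.unusedSectionVars false
set_option linter.unusedVariables false


namespace Exch

variable {W : Type*} [Group W]

open Classical in
/-- Indicator in ZMod 2. -/
noncomputable def ind (x y : W) : ZMod 2 := if x = y then 1 else 0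

lemma ind_congr {x y x' y' : W} (h : (x = y) ↔ (x' = y')) : ind x y = ind x' y' := by
  classical
  unfold ind
  exact if_congr h rfl rfl

lemma ind_self (x : W) : ind x x = 1 := by classical
  unfold ind; exact if_pos rfl

lemma ind_of_ne {x y : W} (h : x ≠ y) : ind x y = 0 := by classical
  unfold ind; exact if_neg h

open Classical in
/-- The sign-flipping permutation attached to an involution `a`. -/
noncomputable def flp (a : W) (ha : a * a = 1) : Equiv.Perm (W × ZMod 2) where
  toFun p := (a * p.1 * a, p.2 + ind p.1 a)
  invFun p := (a * p.1 * a, p.2 + ind p.1 a)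
  left_inv p := by
    obtain ⟨w, e⟩ := p
    have h1 : a * (a * w * a) * a = w := by
      calc a * (a * w * a) * a = (a * a) * w * (a * a) := by group
        _ = w := by rw [ha]; group
    have h2 : (a * w * a = a) ↔ (w = a) := by
      constructor
      · intro h
        have : w = a⁻¹ * (a * w * a) * a⁻¹ := by group
        rw [h] at this
        rw [this]
        have hainv : a⁻¹ = a := inv_eq_of_mul_eq_one_right ha
        rw [hainv]
        calc a * a * a = (a*a)*a := rfl
          _ = a := by rw [ha]; group
      · intro h; rw [h]; rw [ha]; group
    have h3 : ind (a * w * a) a = ind w a := ind_congr h2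
    simp only [h1, h3]
    have : ∀ x : ZMod 2, x + x = 0 := by decide
    rw [add_assoc, this, add_zero]
  right_inv p := by
    obtain ⟨w, e⟩ := p
    have h1 : a * (a * w * a) * a = w := by
      calc a * (a * w * a) * a = (a * a) * w * (a * a) := by group
        _ = w := by rw [ha]; group
    have h2 : (a * w * a = a) ↔ (w = a) := by
      constructor
      · intro h
        have : w = a⁻¹ * (a * w * a) * a⁻¹ := by group
        rw [h] at this
        rw [this]
        have hainv : a⁻¹ = a := inv_eq_of_mul_eq_one_right ha
        rw [hainv]
        calc a * a * a = (a*a)*a := rfl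
          _ = a := by rw [ha]; group
      · intro h; rw [h]; rw [ha]; group
    have h3 : ind (a * w * a) a = ind w a := ind_congr h2
    simp only [h1, h3]
    have : ∀ x : ZMod 2, x + x = 0 := by decide
    rw [add_assoc, this, add_zero]

lemma flp_apply (a : W) (ha : a * a = 1) (w : W) (e : ZMod 2) :
    flp a ha (w, e) = (a * w * a, e + ind w a) := rfl


lemma sum_pair (f : ℕ → ZMod 2) (m : ℕ) :
    ∑ n ∈ Finset.range m, (f (2*n) + f (2*n+1)) = ∑ l ∈ Finset.range (2*m), f l := by
  induction m with
  | zero => simp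
  | succ m ih =>
    rw [Finset.sum_range_succ, ih, Nat.mul_succ]
    rw [show 2*m+2 = (2*m+1)+1 from rfl, Finset.sum_range_succ, Finset.sum_range_succ]
    ring

lemma sum_range_add' {M : Type*} [AddCommMonoid M] (f : ℕ → M) (a b : ℕ) :
    ∑ n ∈ Finset.range (a+b), f n
      = ∑ n ∈ Finset.range a, f n + ∑ n ∈ Finset.range b, f (a+n) := by
  induction b with
  | zero => simp
  | succ b ih =>
    rw [Nat.add_succ, Finset.sum_range_succ, ih, Finset.sum_range_succ, add_assoc]




section TwoGen

variable {b r : W}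

lemma hcore (ha : (r*b)*(r*b) = 1) : r⁻¹ = b * r * b := by
  have h1 : r * (b * r * b) = 1 := by
    calc r * (b * r * b) = (r*b)*(r*b) := by group
      _ = 1 := ha
  exact inv_eq_of_mul_eq_one_right h1

lemma hrb (hb : b * b = 1) (ha : (r*b)*(r*b) = 1) : r⁻¹ * b = b * r := by
  rw [hcore ha]
  calc b * r * b * b = b * r * (b * b) := by group
    _ = b * r := by rw [hb]; group

lemma cpow (hb : b * b = 1) (ha : (r*b)*(r*b) = 1) (k : ℕ) :
    (r⁻¹)^k * b * r^k = b * r^(2*k) := by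
  induction k with
  | zero => simp
  | succ k ih =>
    calc (r⁻¹)^(k+1) * b * r^(k+1)
        = r⁻¹ * ((r⁻¹)^k * b * r^k) * r := by group
      _ = r⁻¹ * (b * r^(2*k)) * r := by rw [ih]
      _ = (r⁻¹ * b) * (r^(2*k) * r) := by group
      _ = (b * r) * (r^(2*k) * r) := by rw [hrb hb ha]
      _ = b * r^(2*(k+1)) := by group

lemma iffc1 (hb : b * b = 1) (ha : (r*b)*(r*b) = 1) (k : ℕ) (w : W) :
    (r^k * w * (r⁻¹)^k = b) ↔ (w = b * r^(2*k)) := by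
  rw [← cpow hb ha k]
  constructor
  · intro h; rw [← h]; group
  · intro h; rw [h]; group

lemma iffc2 (hb : b * b = 1) (ha : (r*b)*(r*b) = 1) (k : ℕ) (w : W) :
    (r^k * w * (r⁻¹)^k = b * r) ↔ (w = b * r^(2*k+1)) := by
  have h1 : (r⁻¹)^k * (b * r) * r^k = b * r^(2*k+1) := by
    calc (r⁻¹)^k * (b * r) * r^k
        = ((r⁻¹)^k * b * r^k) * r := by group
      _ = (b * r^(2*k)) * r := by rw [cpow hb ha k]
      _ = b * r^(2*k+1) := by group
  rw [← h1]
  constructor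
  · intro h; rw [← h]; group
  · intro h; rw [h]; group

lemma iffc3 (hb : b * b = 1) (X : W) : (b * X * b = r * b) ↔ (X = b * r) := by
  have hbinv : b⁻¹ = b := inv_eq_of_mul_eq_one_right hb
  constructor
  · intro h
    have h2 : X = b⁻¹ * (b * X * b) * b⁻¹ := by group
    rw [h, hbinv] at h2
    rw [h2]
    calc b * (r * b) * b = b * r * (b * b) := by group
      _ = b * r := by rw [hb]; group
  · intro h
    rw [h]
    calc b * (b * r) * b = (b * b) * (r * b) := by group
      _ = r * b := by rw [hb]; group

lemma flp_pow_apply (hb : b * b = 1) (ha : (r*b)*(r*b) = 1) (k : ℕ) (w : W) (e : ZMod 2) :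
    ((flp (r*b) ha * flp b hb)^k) (w, e) =
      (r^k * w * (r⁻¹)^k,
       e + ∑ n ∈ Finset.range k,
         (ind w (b * r^(2*n)) + ind w (b * r^(2*n+1)))) := by
  induction k with
  | zero => simp
  | succ k ih =>
    rw [pow_succ', Equiv.Perm.mul_apply, ih, Equiv.Perm.mul_apply, flp_apply, flp_apply]
    have e1 : ind (r^k * w * (r⁻¹)^k) b = ind w (b * r^(2*k)) :=
      ind_congr (iffc1 hb ha k w)
    have e2 : ind (b * (r^k * w * (r⁻¹)^k) * b) (r*b) = ind w (b * r^(2*k+1)) :=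
      ind_congr ((iffc3 hb _).trans (iffc2 hb ha k w))
    simp only [Prod.mk.injEq]
    constructor
    · calc (r*b) * (b * (r^k * w * (r⁻¹)^k) * b) * (r*b)
          = r * (b * b) * (r^k * w * (r⁻¹)^k) * (b * r * b) := by group
        _ = r * 1 * (r^k * w * (r⁻¹)^k) * (b * r * b) := by rw [hb]
        _ = r * 1 * (r^k * w * (r⁻¹)^k) * r⁻¹ := by rw [← hcore ha]
        _ = r^(k+1) * w * (r⁻¹)^(k+1) := by group
    · rw [e1, e2, Finset.sum_range_succ]
      ring

lemma flp_pow_eq_one (hb : b * b = 1) (ha : (r*b)*(r*b) = 1) (m : ℕ) (hr : r^m = 1) :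
    (flp (r*b) ha * flp b hb)^m = 1 := by
  apply Equiv.ext
  rintro ⟨w, e⟩
  rw [flp_pow_apply hb ha m w e]
  have hW : r^m * w * (r⁻¹)^m = w := by rw [inv_pow, hr]; simp
  have hsum : (∑ n ∈ Finset.range m,
      (ind w (b * r^(2*n)) + ind w (b * r^(2*n+1)))) = 0 := by
    rw [sum_pair (fun l => ind w (b * r^l)) m]
    rw [show 2*m = m + m from by ring, sum_range_add' (fun l => ind w (b * r^l)) m m]
    have hper : ∀ n : ℕ, ind w (b * r^(m+n)) = ind w (b * r^n) := by
      intro n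
      rw [pow_add, hr, one_mul]
    simp only [hper]
    have h2 : ∀ x : ZMod 2, x + x = 0 := by decide
    exact h2 _
  rw [hW, hsum, add_zero]
  rfl

lemma flp_congr {a a' : W} (h : a = a') (ha : a * a = 1) (ha' : a' * a' = 1) :
    flp a ha = flp a' ha' := by subst h; rfl

end TwoGen


section Cox

variable {B : Type*} {M : CoxeterMatrix B} (cs : CoxeterSystem M W)

/-- The sign permutations attached to the simple reflections. -/
noncomputable def eta (i : B) : Equiv.Perm (W × ZMod 2) :=
  flp (cs.simple i) (cs.simple_mul_simple_self i)

lemma eta_liftable : M.IsLiftable (eta cs) := by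
  intro i j
  have hb : cs.simple j * cs.simple j = 1 := cs.simple_mul_simple_self j
  have hab : (cs.simple i * cs.simple j) * cs.simple j = cs.simple i := by
    rw [mul_assoc, hb, mul_one]
  have ha : ((cs.simple i * cs.simple j) * cs.simple j) *
      ((cs.simple i * cs.simple j) * cs.simple j) = 1 := by
    rw [hab]; exact cs.simple_mul_simple_self i
  have h1 : eta cs i = flp ((cs.simple i * cs.simple j) * cs.simple j) ha :=
    flp_congr hab.symm _ _
  rw [h1]
  exact flp_pow_eq_one hb ha (M i j) (cs.simple_mul_simple_pow i j)

/-- The homomorphism `W →* Perm (W × ZMod 2)`. -/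
noncomputable def phi : W →* Equiv.Perm (W × ZMod 2) :=
  cs.lift ⟨eta cs, eta_liftable cs⟩

lemma phi_simple (i : B) : phi cs (cs.simple i) = eta cs i :=
  cs.lift_apply_simple (eta_liftable cs) i

/-- Sum of indicators over the right inversion sequence. -/
noncomputable def S (ω : List B) (w : W) : ZMod 2 :=
  ((cs.rightInvSeq ω).map (fun t => ind w t)).sum

lemma phi_wordProd (ω : List B) (w : W) (e : ZMod 2) :
    phi cs (cs.wordProd ω) (w, e) =
      (cs.wordProd ω * w * (cs.wordProd ω)⁻¹, e + S cs ω w) := by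
  induction ω generalizing e with
  | nil =>
    rw [cs.wordProd_nil, map_one]
    simp [S]
  | cons i ω ih =>
    rw [cs.wordProd_cons, map_mul, Equiv.Perm.mul_apply, ih, phi_simple]
    rw [show eta cs i = flp (cs.simple i) (cs.simple_mul_simple_self i) from rfl, flp_apply]
    have hris : cs.rightInvSeq (i :: ω) =
        ((cs.wordProd ω)⁻¹ * cs.simple i * cs.wordProd ω) :: cs.rightInvSeq ω := rfl
    have hiff : (cs.wordProd ω * w * (cs.wordProd ω)⁻¹ = cs.simple i) ↔
        (w = (cs.wordProd ω)⁻¹ * cs.simple i * cs.wordProd ω) := by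
      constructor
      · intro h; rw [← h]; group
      · intro h; rw [h]; group
    simp only [Prod.mk.injEq]
    constructor
    · rw [mul_inv_rev, cs.inv_simple]
      group
    · rw [ind_congr hiff]
      unfold S
      rw [hris, List.map_cons, List.sum_cons]
      ring

lemma S_eq_of_wordProd_eq {ω₁ ω₂ : List B} (h : cs.wordProd ω₁ = cs.wordProd ω₂) (w : W) :
    S cs ω₁ w = S cs ω₂ w := by
  have h1 := phi_wordProd cs ω₁ w 0
  have h2 := phi_wordProd cs ω₂ w 0
  rw [h] at h1
  have h3 := h1.symm.trans h2
  have h4 := congrArg Prod.snd h3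
  simpa using h4

lemma mem_of_S_ne_zero {ω : List B} {w : W} (h : S cs ω w ≠ 0) : w ∈ cs.rightInvSeq ω := by
  by_contra hmem
  apply h
  apply List.sum_eq_zero
  intro x hx
  obtain ⟨t, ht, rfl⟩ := List.mem_map.mp hx
  exact ind_of_ne (fun he => hmem (he ▸ ht))

lemma right_exchange {ω : List B} (hω : cs.IsReduced ω) {i : B}
    (h : cs.length (cs.wordProd ω * cs.simple i) < cs.length (cs.wordProd ω)) :
    cs.simple i ∈ cs.rightInvSeq ω := by
  obtain ⟨v, hv, hveq⟩ := cs.exists_reduced_word' (cs.wordProd ω * cs.simple i)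
  have hlen : cs.length (cs.wordProd ω * cs.simple i) + 1 = cs.length (cs.wordProd ω) := by
    rcases cs.length_mul_simple (cs.wordProd ω) i with h1 | h1
    · omega
    · exact h1
  have huprod : cs.wordProd (v ++ [i]) = cs.wordProd ω := by
    rw [cs.wordProd_append, ← hveq]
    rw [show cs.wordProd [i] = cs.simple i from by
      rw [cs.wordProd_cons, cs.wordProd_nil, mul_one]]
    rw [mul_assoc, cs.simple_mul_simple_self, mul_one]
  have hured : cs.IsReduced (v ++ [i]) := by
    unfold CoxeterSystem.IsReduced
    rw [huprod, List.length_append, List.length_singleton, ← hv, ← hveq]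
    omega
  -- compute S of the concatenated word at (s i)
  have hconc : v ++ [i] = v.concat i := (List.concat_eq_append (as := v) (a := i)).symm
  have hnd : (cs.rightInvSeq (v ++ [i])).Nodup := hured.nodup_rightInvSeq
  rw [hconc, cs.rightInvSeq_concat] at hnd
  have hnotmem : cs.simple i ∉ (List.map (⇑(MulAut.conj (cs.simple i))) (cs.rightInvSeq v)) := by
    intro hc
    rw [List.concat_eq_append, List.nodup_append] at hnd
    exact hnd.2.2 _ hc _ (List.mem_singleton_self _) rfl
  have hS1 : S cs (v ++ [i]) (cs.simple i) = 1 := by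
    unfold S
    rw [hconc, cs.rightInvSeq_concat, List.concat_eq_append, List.map_append,
      List.sum_append]
    have hz : ((List.map (⇑(MulAut.conj (cs.simple i))) (cs.rightInvSeq v)).map
        (fun t => ind (cs.simple i) t)).sum = 0 := by
      apply List.sum_eq_zero
      intro x hx
      obtain ⟨t, ht, rfl⟩ := List.mem_map.mp hx
      exact ind_of_ne (fun he => hnotmem (he ▸ ht))
    rw [hz, zero_add]
    simp [ind_self]
  have hS2 : S cs ω (cs.simple i) = 1 := by
    rw [S_eq_of_wordProd_eq cs huprod.symm (cs.simple i), hS1]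
  apply mem_of_S_ne_zero cs
  rw [hS2]
  decide

lemma left_exchange {ω : List B} (hω : cs.IsReduced ω) {i : B}
    (h : cs.length (cs.simple i * cs.wordProd ω) < cs.length (cs.wordProd ω)) :
    cs.simple i ∈ cs.leftInvSeq ω := by
  have hrev : cs.IsReduced ω.reverse := (cs.isReduced_reverse_iff ω).mpr hω
  have h2 : cs.length (cs.wordProd ω.reverse * cs.simple i)
      < cs.length (cs.wordProd ω.reverse) := by
    rw [cs.wordProd_reverse]
    have : (cs.wordProd ω)⁻¹ * cs.simple i = (cs.simple i * cs.wordProd ω)⁻¹ := by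
      rw [mul_inv_rev, cs.inv_simple]
    rw [this, cs.length_inv, cs.length_inv]
    exact h
  have h3 := right_exchange cs hrev h2
  rw [cs.rightInvSeq_reverse] at h3
  exact List.mem_reverse.mp h3

lemma exchange {ω : List B} (hω : cs.IsReduced ω) {i : B}
    (h : cs.length (cs.simple i * cs.wordProd ω) < cs.length (cs.wordProd ω)) :
    ∃ j, j < ω.length ∧ cs.simple i * cs.wordProd ω = cs.wordProd (ω.eraseIdx j) := by
  have hmem := left_exchange cs hω h
  obtain ⟨j, hj, hje⟩ := List.mem_iff_getElem.mp hmem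
  rw [cs.length_leftInvSeq] at hj
  refine ⟨j, hj, ?_⟩
  rw [← cs.getD_leftInvSeq_mul_wordProd ω j]
  congr 1
  rw [List.getD_eq_getElem _ _ (by rw [cs.length_leftInvSeq]; exact hj)]
  exact hje.symm

end Cox

end Exch

namespace Aux

lemma backSat_singleton {B : Type*} (w : List B) : BackSat {w} := by
  induction w with
  | nil =>
    apply BackSat.step
    · rintro σ ⟨w', hw'⟩
      exact absurd hw' (by simp)
    · rintro σ ⟨w', hw'⟩
      exact absurd hw' (by simp)
  | cons a t ih =>
    apply BackSat.step
    · rintro σ ⟨w₀, hw₀⟩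
      rw [Set.mem_singleton_iff, List.cons.injEq] at hw₀
      obtain ⟨rfl, rfl⟩ := hw₀
      have hset : {w' : List B | σ :: w' ∈ ({σ :: w₀} : Set (List B))} = {w₀} := by
        ext w'
        simp [List.cons.injEq]
      rw [hset]
      exact ih
    · rintro σ ⟨w₀, hw₀⟩ u hu
      rw [Set.mem_singleton_iff, List.cons.injEq] at hw₀
      obtain ⟨rfl, rfl⟩ := hw₀
      rw [Set.mem_singleton_iff] at hu
      subst hu
      exact ⟨w₀, rfl, List.sublist_cons_self σ w₀⟩


variable {B W : Type*} [Group W] {M : CoxeterMatrix B}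

lemma descent_facts (cs : CoxeterSystem M W) {σ : B} {w₀ : List B} {π₀ : W}
    (hred : cs.IsReduced (σ :: w₀)) (heq : cs.wordProd (σ :: w₀) = π₀) :
    cs.length π₀ = w₀.length + 1 ∧ cs.wordProd w₀ = cs.simple σ * π₀ ∧
      cs.length (cs.simple σ * π₀) = w₀.length ∧ cs.IsReduced w₀ := by
  have h1 : cs.length π₀ = w₀.length + 1 := by
    have := hred
    unfold CoxeterSystem.IsReduced at this
    rw [heq] at this
    simpa using this
  have h2 : cs.wordProd w₀ = cs.simple σ * π₀ := by
    rw [← heq, cs.wordProd_cons, ← mul_assoc, cs.simple_mul_simple_self, one_mul]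
  have h3 : cs.length (cs.simple σ * π₀) = w₀.length := by
    have hle : cs.length (cs.simple σ * π₀) ≤ w₀.length := by
      rw [← h2]; exact cs.length_wordProd_le w₀
    rcases cs.length_simple_mul π₀ σ with h | h <;> omega
  exact ⟨h1, h2, h3, by unfold CoxeterSystem.IsReduced; rw [h2, h3]⟩

lemma backSat_RW_aux (cs : CoxeterSystem M W) :
    ∀ (n : ℕ) (π₀ : W), cs.length π₀ ≤ n →
      BackSat {w : List B | cs.IsReduced w ∧ cs.wordProd w = π₀} := by
  intro n
  induction n with
  | zero =>
    intro π₀ hπ₀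
    apply BackSat.step
    · rintro σ ⟨w₀, hred, heq⟩
      obtain ⟨h1, -, -, -⟩ := descent_facts cs hred heq
      omega
    · rintro σ ⟨w₀, hred, heq⟩
      obtain ⟨h1, -, -, -⟩ := descent_facts cs hred heq
      omega
  | succ n ih =>
    intro π₀ hπ₀
    apply BackSat.step
    · rintro σ ⟨w₀, hred, heq⟩
      obtain ⟨h1, h2, h3, h4⟩ := descent_facts cs hred heq
      have hset : {w : List B | σ :: w ∈ {w : List B | cs.IsReduced w ∧ cs.wordProd w = π₀}}
          = {w : List B | cs.IsReduced w ∧ cs.wordProd w = cs.simple σ * π₀} := by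
        ext w
        simp only [Set.mem_setOf_eq]
        constructor
        · rintro ⟨hwred, hweq⟩
          obtain ⟨g1, g2, g3, g4⟩ := descent_facts cs hwred hweq
          exact ⟨g4, g2⟩
        · rintro ⟨hwred, hweq⟩
          have hprod : cs.wordProd (σ :: w) = π₀ := by
            rw [cs.wordProd_cons, hweq, ← mul_assoc, cs.simple_mul_simple_self, one_mul]
          refine ⟨?_, hprod⟩
          unfold CoxeterSystem.IsReduced
          rw [hprod, List.length_cons]
          have : w.length = cs.length (cs.simple σ * π₀) := by
            rw [← hweq]; exact hwred.symm
          omega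
      rw [hset]
      exact ih (cs.simple σ * π₀) (by omega)
    · rintro σ ⟨w₀, hred, heq⟩ u ⟨hured, hueq⟩
      obtain ⟨h1, h2, h3, h4⟩ := descent_facts cs hred heq
      have hdesc : cs.length (cs.simple σ * cs.wordProd u) < cs.length (cs.wordProd u) := by
        rw [hueq]; omega
      obtain ⟨j, hj, hje⟩ := Exch.exchange cs hured hdesc
      refine ⟨u.eraseIdx j, ⟨?_, ?_⟩, List.eraseIdx_sublist u j⟩
      · unfold CoxeterSystem.IsReduced
        have hlen : (u.eraseIdx j).length + 1 = u.length := List.length_eraseIdx_add_one hj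
        have hprod : cs.wordProd (σ :: u.eraseIdx j) = π₀ := by
          rw [cs.wordProd_cons, ← hje, ← mul_assoc, cs.simple_mul_simple_self, one_mul, hueq]
        rw [hprod, List.length_cons, hlen]
        have : cs.length (cs.wordProd u) = u.length := hured
        rw [hueq] at this
        omega
      · rw [cs.wordProd_cons, ← hje, ← mul_assoc, cs.simple_mul_simple_self, one_mul, hueq]



end Aux


variable {B W : Type*} [Group W] {M : CoxeterMatrix B}

theorem singleton_and_allReducedWords_backSat (cs : CoxeterSystem M W) (π : W) :
    (∀ w : List B, cs.IsReduced w → cs.wordProd w = π → BackSat {w}) ∧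
    BackSat {w : List B | cs.IsReduced w ∧ cs.wordProd w = π} :=
  ⟨fun w _ _ => Aux.backSat_singleton w, Aux.backSat_RW_aux cs (cs.length π) π le_rfl⟩
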